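/- Let X be a nonempty set of norms on V such that: (1) e^a η ∈ X for all η ∈ X and a ∈ ℝ; (2) any two elements of X are at finite Goldman–Iwahori distance; (3) X is a join-semilattice: any nonempty subset F ⊆ X bounded above in X has a least upper bound in X. Then the family of closed balls of the Goldman–Iwahori metric on X satisfies the Helly property: any family of pairwise intersecting closed balls has nonempty total intersection. -/
import Mathlib


def IsNorm (𝕂 : Type*) [NormedField 𝕂] {V : Type*} [AddCommGroup V] [Module 𝕂 V]
    (η : V → ℝ) : Prop :=
  (∀ v, 0 ≤ η v) ∧ (∀ v, η v = 0 ↔ v = 0) ∧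
    (∀ (α : 𝕂) (v : V), η (α • v) = ‖α‖ * η v) ∧ ∀ u v, η (u + v) ≤ η u + η v

noncomputable def GIdist {V : Type*} [Zero V] (η η' : V → ℝ) : ℝ :=
  ⨆ v : {v : V // v ≠ 0}, |Real.log (η v.1 / η' v.1)|

private lemma abs_log_div_le {x y ρ : ℝ} (hx : 0 < x) (hy : 0 < y)
    (h1 : Real.exp (-ρ) * y ≤ x) (h2 : x ≤ Real.exp ρ * y) :
    |Real.log (x / y)| ≤ ρ := by
  rw [abs_le]
  constructor
  · rw [Real.le_log_iff_exp_le (div_pos hx hy), le_div_iff₀ hy]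
    exact h1
  · rw [Real.log_le_iff_le_exp (div_pos hx hy), div_le_iff₀ hy]
    exact h2

private lemma bounds_of_abs_log_le {x y ρ : ℝ} (hx : 0 < x) (hy : 0 < y)
    (h : |Real.log (x / y)| ≤ ρ) :
    Real.exp (-ρ) * y ≤ x ∧ x ≤ Real.exp ρ * y := by
  rw [abs_le] at h
  constructor
  · rw [← le_div_iff₀ hy, ← Real.le_log_iff_exp_le (div_pos hx hy)]
    exact h.1
  · rw [← div_le_iff₀ hy, ← Real.log_le_iff_le_exp (div_pos hx hy)]
    exact h.2

/-- Proposition 2.1: if a nonempty set `X` of norms is closed under scaling,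
has pairwise finite Goldman–Iwahori distances, and is a join-semilattice for the
pointwise order, then closed balls of the Goldman–Iwahori metric on `X` satisfy
the Helly property. -/
theorem goldmanIwahori_helly
    {𝕂 V : Type*} [NormedField 𝕂] [AddCommGroup V] [Module 𝕂 V]
    (X : Set (V → ℝ)) (hne : X.Nonempty) (hnorm : ∀ η ∈ X, IsNorm 𝕂 η)
    (hscale : ∀ η ∈ X, ∀ a : ℝ, (fun v => Real.exp a * η v) ∈ X)
    (hfin : ∀ η ∈ X, ∀ η' ∈ X, ∃ a : ℝ,
      ∀ v, Real.exp (-a) * η' v ≤ η v ∧ η v ≤ Real.exp a * η' v)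
    (hjoin : ∀ F ⊆ X, F.Nonempty → (∃ η ∈ X, ∀ θ ∈ F, ∀ v, θ v ≤ η v) →
      ∃ j ∈ X, (∀ θ ∈ F, ∀ v, θ v ≤ j v) ∧
        ∀ η ∈ X, (∀ θ ∈ F, ∀ v, θ v ≤ η v) → ∀ v, j v ≤ η v)
    {ι : Type*} (c : ι → V → ℝ) (hc : ∀ i, c i ∈ X) (r : ι → ℝ) (hr : ∀ i, 0 ≤ r i)
    (hpair : ∀ i j, ∃ θ ∈ X, GIdist (c i) θ ≤ r i ∧ GIdist (c j) θ ≤ r j) :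
    ∃ θ ∈ X, ∀ i, GIdist (c i) θ ≤ r i := by
  classical
  have hpos : ∀ η ∈ X, ∀ v : V, v ≠ 0 → 0 < η v := by
    intro η hη v hv
    exact lt_of_le_of_ne ((hnorm η hη).1 v)
      (fun e => hv (((hnorm η hη).2.1 v).mp e.symm))
  -- from a distance bound get pointwise bounds
  have key : ∀ η ∈ X, ∀ θ ∈ X, ∀ ρ : ℝ, GIdist η θ ≤ ρ →
      ∀ v, Real.exp (-ρ) * θ v ≤ η v ∧ η v ≤ Real.exp ρ * θ v := by
    intro η hη θ hθ ρ hd v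
    by_cases hv : v = 0
    · subst hv
      have hη0 : η 0 = 0 := ((hnorm η hη).2.1 0).mpr rfl
      have hθ0 : θ 0 = 0 := ((hnorm θ hθ).2.1 0).mpr rfl
      simp [hη0, hθ0]
    · obtain ⟨a, ha⟩ := hfin η hη θ hθ
      have hle : |Real.log (η v / θ v)| ≤ GIdist η θ := by
        refine le_ciSup (f := fun w : {w : V // w ≠ 0} =>
          |Real.log (η w.1 / θ w.1)|) ⟨a, ?_⟩ ⟨v, hv⟩
        rintro x ⟨w, rfl⟩
        exact abs_log_div_le (hpos η hη w.1 w.2) (hpos θ hθ w.1 w.2)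
          (ha w.1).1 (ha w.1).2
      exact bounds_of_abs_log_le (hpos η hη v hv) (hpos θ hθ v hv) (hle.trans hd)
  -- from pointwise bounds get a distance bound
  have key' : ∀ η ∈ X, ∀ θ ∈ X, ∀ ρ : ℝ, 0 ≤ ρ →
      (∀ v, Real.exp (-ρ) * θ v ≤ η v ∧ η v ≤ Real.exp ρ * θ v) →
      GIdist η θ ≤ ρ := by
    intro η hη θ hθ ρ hρ h
    exact Real.iSup_le (fun w => abs_log_div_le (hpos η hη w.1 w.2)
      (hpos θ hθ w.1 w.2) (h w.1).1 (h w.1).2) hρ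
  rcases isEmpty_or_nonempty ι with hι | hι
  · obtain ⟨θ, hθ⟩ := hne
    exact ⟨θ, hθ, fun i => (hι.false i).elim⟩
  obtain ⟨i₀⟩ := hι
  set F : Set (V → ℝ) := Set.range (fun i => fun v => Real.exp (-(r i)) * c i v) with hF
  have hFX : F ⊆ X := by
    rintro _ ⟨i, rfl⟩
    exact hscale (c i) (hc i) (-(r i))
  -- each `exp (r j) * c j` is an upper bound of F
  have hub : ∀ j, ∀ θ ∈ F, ∀ v, θ v ≤ Real.exp (r j) * c j v := by
    rintro j _ ⟨i, rfl⟩ v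
    obtain ⟨θ, hθX, hdi, hdj⟩ := hpair i j
    have h1 := (key (c i) (hc i) θ hθX (r i) hdi v).2
    have h2 := (key (c j) (hc j) θ hθX (r j) hdj v).1
    -- exp(-(r i)) * c i v ≤ θ v ≤ exp (r j) * c j v
    have hθci : Real.exp (-(r i)) * c i v ≤ θ v := by
      have := mul_le_mul_of_nonneg_left h1 (Real.exp_pos (-(r i))).le
      rwa [← mul_assoc, ← Real.exp_add, neg_add_cancel, Real.exp_zero, one_mul] at this
    have hθcj : θ v ≤ Real.exp (r j) * c j v := by
      have := mul_le_mul_of_nonneg_left h2 (Real.exp_pos (r j)).le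
      rwa [← mul_assoc, ← Real.exp_add, add_neg_cancel, Real.exp_zero, one_mul] at this
    exact hθci.trans hθcj
  obtain ⟨j, hjX, hjub, hjlub⟩ := hjoin F hFX ⟨_, ⟨i₀, rfl⟩⟩
    ⟨_, hscale (c i₀) (hc i₀) (r i₀), hub i₀⟩
  refine ⟨j, hjX, fun i => ?_⟩
  refine key' (c i) (hc i) j hjX (r i) (hr i) (fun v => ?_)
  constructor
  · -- exp(-(r i)) * j v ≤ c i v, from j ≤ exp (r i) * c i
    have hji := hjlub _ (hscale (c i) (hc i) (r i)) (hub i) v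
    have := mul_le_mul_of_nonneg_left hji (Real.exp_pos (-(r i))).le
    rwa [← mul_assoc, ← Real.exp_add, neg_add_cancel, Real.exp_zero, one_mul] at this
  · -- c i v ≤ exp (r i) * j v, from exp(-(r i)) * c i ≤ j
    have hij := hjub _ ⟨i, rfl⟩ v
    have := mul_le_mul_of_nonneg_left hij (Real.exp_pos (r i)).le
    rwa [← mul_assoc, ← Real.exp_add, add_neg_cancel, Real.exp_zero, one_mul] at this
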